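/- Let G=(V,p,μ) be a weighted graph. Then for every function f:V→ℝ and every x∈V, Γ₂f(x) = (1/4)·|D²f|²(x) − Γf(x) + (1/2)·(Δf(x))², where |D²f|²(x) = ∑_{y∼x} p(x,y) ∑_{z∼y} p(y,z)·(f(x)−2f(y)+f(z))². -/
import Mathlib


/-- A weighted graph `G = (V, p, μ)`: a nonnegative kernel `p` and a positive
measure `μ` on the vertex set `V`, such that `G` is locally finite, `p` is a
Markov kernel, and `G` is connected.  Vertices `x, y` are neighbours (`x ∼ y`)
iff `0 < p x y`. -/
structure WeightedGraph (V : Type*) where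
  p : V → V → ℝ
  μ : V → ℝ
  p_nonneg : ∀ x y, 0 ≤ p x y
  μ_pos : ∀ x, 0 < μ x
  locallyFinite : ∀ x, {y | 0 < p x y}.Finite
  markov : ∀ x, HasSum (p x) 1
  connected : ∀ x y : V, ∃ n : ℕ, ∃ c : Fin (n + 1) → V,
      c 0 = x ∧ c (Fin.last n) = y ∧ ∀ i : Fin n, 0 < p (c i.castSucc) (c i.succ)

namespace WeightedGraph

variable {V : Type*} (G : WeightedGraph V)

/-- The Laplacian `Δ f (x) = ∑_{y ∼ x} p x y * (f y - f x)`.  (Summing over all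
of `V` is the same, since `p x y = 0` unless `y ∼ x`.) -/
noncomputable def lap (f : V → ℝ) (x : V) : ℝ := ∑' y, G.p x y * (f y - f x)

/-- The carré du champ `Γ f (x) = (1/2) ∑_{y ∼ x} p x y * (f y - f x)^2`. -/
noncomputable def gamma (f : V → ℝ) (x : V) : ℝ := (1 / 2) * ∑' y, G.p x y * (f y - f x) ^ 2

/-- The bilinear carré du champ
`Γ(f,g)(x) = (1/2) ∑_{y ∼ x} p x y * (f y - f x) * (g y - g x)`. -/
noncomputable def gammaBil (f g : V → ℝ) (x : V) : ℝ :=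
  (1 / 2) * ∑' y, G.p x y * (f y - f x) * (g y - g x)

/-- The iterated carré du champ `Γ₂ f = (1/2) Δ (Γ f) - Γ(f, Δ f)`. -/
noncomputable def gamma2 (f : V → ℝ) (x : V) : ℝ :=
  (1 / 2) * G.lap (G.gamma f) x - G.gammaBil f (G.lap f) x

/-- Bounded geometry with constant `α > 0`: the uniform ellipticity condition (A1)
`p x y ≥ α` whenever `x ∼ y`, and the reversibility condition (A2)
`p x y * μ x = p y x * μ y`. -/
def BoundedGeometry (α : ℝ) : Prop :=
  0 < α ∧ (∀ x y, 0 < G.p x y → α ≤ G.p x y) ∧ ∀ x y, G.p x y * G.μ x = G.p y x * G.μ y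

/-- The Bakry–Émery curvature-dimension condition `CD(K, n)`:
`Γ₂ f ≥ (1/n) (Δ f)² + K Γ f`. -/
def CD (K : ℝ) (n : ℕ) : Prop :=
  ∀ f : V → ℝ, ∀ x : V, (1 / (n : ℝ)) * G.lap f x ^ 2 + K * G.gamma f x ≤ G.gamma2 f x

/-- The Bakry–Émery curvature-dimension condition `CD(K, ∞)`: `Γ₂ f ≥ K Γ f`. -/
def CDInfty (K : ℝ) : Prop :=
  ∀ f : V → ℝ, ∀ x : V, K * G.gamma f x ≤ G.gamma2 f x

/-- The graph distance `d(x,y)`: the least length of a path of consecutive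
neighbours joining `x` to `y` (and `0` if `x = y`). -/
noncomputable def dist (x y : V) : ℕ :=
  sInf {n : ℕ | ∃ c : Fin (n + 1) → V,
    c 0 = x ∧ c (Fin.last n) = y ∧ ∀ i : Fin n, 0 < G.p (c i.castSucc) (c i.succ)}

/-- The measure `μ(B(x,r)) = ∑_{y : d(x,y) ≤ r} μ y` of the closed ball `B(x,r)`. -/
noncomputable def ballMeasure (x : V) (r : ℝ) : ℝ :=
  ∑' y : {y : V // (G.dist x y : ℝ) ≤ r}, G.μ y

end WeightedGraph

/-- The sup norm `‖f‖_∞ = sup_x |f x|` of a (bounded) function on `V`. -/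
noncomputable def supNorm {V : Type*} (f : V → ℝ) : ℝ := ⨆ x, |f x|

namespace WeightedGraph
variable {V : Type*} (G : WeightedGraph V)

lemma tsum_supp (w : V) (F : V → ℝ) (h : ∀ y, G.p w y = 0 → F y = 0) :
    ∑' y, F y = ∑ y ∈ (G.locallyFinite w).toFinset, F y := by
  apply tsum_eq_sum
  intro y hy
  apply h
  have : ¬ 0 < G.p w y := by simpa [Set.Finite.mem_toFinset] using hy
  linarith [G.p_nonneg w y]

lemma markov_sum (w : V) : ∑ y ∈ (G.locallyFinite w).toFinset, G.p w y = 1 := by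
  rw [← G.tsum_supp w (G.p w) (fun y h => h)]
  exact (G.markov w).tsum_eq

end WeightedGraph

/-- **Bochner formula for weighted graphs.**
`Γ₂ f(x) = (1/4)|D²f|²(x) - Γf(x) + (1/2)(Δf(x))²` where
`|D²f|²(x) = ∑_{y∼x} p(x,y) ∑_{z∼y} p(y,z) (f(x) - 2f(y) + f(z))²`. -/
theorem bochner_formula {V : Type*} [Countable V]
    (G : WeightedGraph V) (f : V → ℝ) (x : V) :
    G.gamma2 f x =
      (1 / 4) * (∑' y, G.p x y * ∑' z, G.p y z * (f x - 2 * f y + f z) ^ 2)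
        - G.gamma f x + (1 / 2) * (G.lap f x) ^ 2 := by
  classical
  set t : V → Finset V := fun w => (G.locallyFinite w).toFinset with ht
  -- finite-sum formulas
  have hlap : ∀ w, G.lap f w = ∑ y ∈ t w, G.p w y * (f y - f w) := fun w =>
    G.tsum_supp w _ (fun y h => by rw [h]; ring)
  have hgam : ∀ w, G.gamma f w = (1/2) * ∑ y ∈ t w, G.p w y * (f y - f w) ^ 2 := fun w => by
    rw [WeightedGraph.gamma, G.tsum_supp w _ (fun y h => by rw [h]; ring)]
  have hbil : G.gammaBil f (G.lap f) x
      = (1/2) * ∑ y ∈ t x, G.p x y * (f y - f x) * (G.lap f y - G.lap f x) := by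
    rw [WeightedGraph.gammaBil, G.tsum_supp x _ (fun y h => by rw [h]; ring)]
  have hlapgam : G.lap (G.gamma f) x
      = ∑ y ∈ t x, G.p x y * (G.gamma f y - G.gamma f x) :=
    G.tsum_supp x _ (fun y h => by rw [h]; ring)
  have hdouble : (∑' y, G.p x y * ∑' z, G.p y z * (f x - 2 * f y + f z) ^ 2)
      = ∑ y ∈ t x, G.p x y * ∑ z ∈ t y, G.p y z * (f x - 2 * f y + f z) ^ 2 := by
    have hin : ∀ y, (∑' z, G.p y z * (f x - 2 * f y + f z) ^ 2)
        = ∑ z ∈ t y, G.p y z * (f x - 2 * f y + f z) ^ 2 := fun y =>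
      G.tsum_supp y _ (fun z h => by rw [h]; ring)
    rw [tsum_congr (fun y => by rw [hin y])]
    exact G.tsum_supp x _ (fun y h => by rw [h]; ring)
  -- abbreviations
  set A : V → ℝ := fun y => ∑ z ∈ t y, G.p y z * (f z - f y) ^ 2 with hA
  set B : V → ℝ := fun y => ∑ z ∈ t y, G.p y z * (f z - f y) with hB
  have hLB : ∀ w, G.lap f w = B w := hlap
  -- inner expansion
  have hinner : ∀ y, (∑ z ∈ t y, G.p y z * (f x - 2 * f y + f z) ^ 2)
      = A y - 2 * (f y - f x) * B y + (f y - f x) ^ 2 := by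
    intro y
    have : (∑ z ∈ t y, G.p y z * (f x - 2 * f y + f z) ^ 2)
        = ∑ z ∈ t y, (G.p y z * (f z - f y) ^ 2
            - 2 * (f y - f x) * (G.p y z * (f z - f y)) + (f y - f x) ^ 2 * G.p y z) :=
      Finset.sum_congr rfl (fun z _ => by ring)
    rw [this, Finset.sum_add_distrib, Finset.sum_sub_distrib, ← Finset.mul_sum,
      ← Finset.mul_sum, G.markov_sum y]
    ring
  -- main sums as atoms
  set T1 : ℝ := ∑ y ∈ t x, G.p x y * A y with hT1
  set T2 : ℝ := ∑ y ∈ t x, G.p x y * (f y - f x) * B y with hT2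
  set T3 : ℝ := ∑ y ∈ t x, G.p x y * (f y - f x) ^ 2 with hT3
  set T4 : ℝ := ∑ y ∈ t x, G.p x y * (f y - f x) with hT4
  have hRHS : (∑ y ∈ t x, G.p x y * ∑ z ∈ t y, G.p y z * (f x - 2 * f y + f z) ^ 2)
      = T1 - 2 * T2 + T3 := by
    have : (∑ y ∈ t x, G.p x y * ∑ z ∈ t y, G.p y z * (f x - 2 * f y + f z) ^ 2)
        = ∑ y ∈ t x, (G.p x y * A y - 2 * (G.p x y * (f y - f x) * B y)
            + G.p x y * (f y - f x) ^ 2) :=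
      Finset.sum_congr rfl (fun y _ => by rw [hinner y]; ring)
    rw [this, Finset.sum_add_distrib, Finset.sum_sub_distrib, ← Finset.mul_sum]
  have hLG : G.lap (G.gamma f) x = (1/2) * T1 - (1/2) * T3 := by
    rw [hlapgam]
    have : (∑ y ∈ t x, G.p x y * (G.gamma f y - G.gamma f x))
        = ∑ y ∈ t x, ((1/2) * (G.p x y * A y) - G.gamma f x * G.p x y) :=
      Finset.sum_congr rfl (fun y _ => by rw [hgam y]; ring)
    rw [this, Finset.sum_sub_distrib, ← Finset.mul_sum, ← Finset.mul_sum, G.markov_sum x,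
      hgam x]
    ring
  have hGB : G.gammaBil f (G.lap f) x = (1/2) * T2 - (1/2) * T4 * T4 := by
    rw [hbil]
    have : (∑ y ∈ t x, G.p x y * (f y - f x) * (G.lap f y - G.lap f x))
        = ∑ y ∈ t x, (G.p x y * (f y - f x) * B y
            - G.lap f x * (G.p x y * (f y - f x))) :=
      Finset.sum_congr rfl (fun y _ => by rw [hLB y]; ring)
    rw [this, Finset.sum_sub_distrib, ← Finset.mul_sum, hlap x]
    ring
  rw [WeightedGraph.gamma2, hdouble, hRHS, hLG, hGB, hgam x, hlap x]
  ring
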